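/- Fix b ∈ ℝ, ψ ∈ (0,1), λ_x > 0, d > 0, and z > 0. For λ_θ > 0 let λ(λ_θ) denote the unique solution in [0,∞) of −λ = b·(λ/λ_x)^ψ − d·z − λ_θ. Then the quantity B(λ_θ) := (λ(λ_θ)/λ_x)^(2ψ)·λ_θ^(−2) is strictly decreasing in λ_θ: if 0 < λ_θ₁ < λ_θ₂ then B(λ_θ₁) > B(λ_θ₂). -/

import Mathlib

/-- Step 1 of the second-moment-shock analysis: with `λ(λθ)` the unique
nonnegative solution of `-λ = b (λ/λx)^ψ - d z - λθ`, the TFPQ dispersion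
`B(λθ) = (λ(λθ)/λx)^(2ψ) λθ⁻²` is strictly decreasing in `λθ`. -/
theorem stmt_9 (b ψ lamx d z : ℝ) (hψ0 : 0 < ψ) (hψ1 : ψ < 1)
    (hlamx : 0 < lamx) (hd : 0 < d) (hz : 0 < z)
    (lamθ₁ lamθ₂ l₁ l₂ : ℝ) (hθ₁ : 0 < lamθ₁) (hθ₁₂ : lamθ₁ < lamθ₂)
    (hl₁ : 0 ≤ l₁) (hl₂ : 0 ≤ l₂)
    (heq₁ : -l₁ = b * (l₁ / lamx) ^ ψ - d * z - lamθ₁)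
    (heq₂ : -l₂ = b * (l₂ / lamx) ^ ψ - d * z - lamθ₂) :
    (l₂ / lamx) ^ (2 * ψ) * lamθ₂ ^ (-(2 : ℝ))
      < (l₁ / lamx) ^ (2 * ψ) * lamθ₁ ^ (-(2 : ℝ)) := by
  have hθ₂ : 0 < lamθ₂ := hθ₁.trans hθ₁₂
  set s₁ : ℝ := (l₁ / lamx) ^ ψ with hs₁def
  set s₂ : ℝ := (l₂ / lamx) ^ ψ with hs₂def
  have hs₁0 : 0 ≤ s₁ := Real.rpow_nonneg (div_nonneg hl₁ hlamx.le) ψ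
  have hs₂0 : 0 ≤ s₂ := Real.rpow_nonneg (div_nonneg hl₂ hlamx.le) ψ
  -- f(l_i) = d z + lamθ_i > 0
  have hf₁ : l₁ + b * s₁ = d * z + lamθ₁ := by linarith
  have hf₂ : l₂ + b * s₂ = d * z + lamθ₂ := by linarith
  have hdz : 0 < d * z := mul_pos hd hz
  have hf₁pos : 0 < l₁ + b * s₁ := by rw [hf₁]; positivity
  have hf₂pos : 0 < l₂ + b * s₂ := by rw [hf₂]; positivity
  -- l₁ > 0, l₂ > 0
  have hl₁pos : 0 < l₁ := by
    rcases hl₁.lt_or_eq with h | h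
    · exact h
    · exfalso
      have : s₁ = 0 := by
        rw [hs₁def, ← h, zero_div, Real.zero_rpow hψ0.ne']
      rw [this] at hf₁pos; simp [← h] at hf₁pos
  have hl₂pos : 0 < l₂ := by
    rcases hl₂.lt_or_eq with h | h
    · exact h
    · exfalso
      have : s₂ = 0 := by
        rw [hs₂def, ← h, zero_div, Real.zero_rpow hψ0.ne']
      rw [this] at hf₂pos; simp [← h] at hf₂pos
  -- key monotonicity: l₁ < l₂
  have hll : l₁ < l₂ := by
    by_contra hcon
    push_neg at hcon  -- l₂ ≤ l₁
    rcases hcon.lt_or_eq with hlt | heqll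
    · -- l₂ < l₁
      set r : ℝ := l₂ / l₁ with hrdef
      have hr0 : 0 < r := div_pos hl₂pos hl₁pos
      have hr1 : r < 1 := (div_lt_one hl₁pos).2 hlt
      have hsplit : l₂ / lamx = (l₁ / lamx) * r := by
        field_simp [hrdef]; rw [hrdef]; field_simp
      have hs₂eq : s₂ = s₁ * r ^ ψ := by
        rw [hs₂def, hsplit, Real.mul_rpow (div_nonneg hl₁ hlamx.le) hr0.le]
      have hrψle1 : r ^ ψ ≤ 1 := Real.rpow_le_one hr0.le hr1.le hψ0.le
      have hrrψ : r ≤ r ^ ψ := by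
        have := Real.rpow_le_rpow_of_exponent_ge hr0 hr1.le hψ1.le
        rwa [Real.rpow_one] at this
      -- from the two equations
      have hdiff : (l₂ - l₁) + b * (s₂ - s₁) = lamθ₂ - lamθ₁ := by linarith
      have hbneg : b * (s₂ - s₁) > l₁ - l₂ := by linarith
      -- (-b) * s₁ < l₁ since l₁ + b s₁ > 0
      have h1 : (-b) * s₁ < l₁ := by linarith
      -- b (s₂ - s₁) = (-b) s₁ (1 - r^ψ)
      have h2 : b * (s₂ - s₁) = (-b) * s₁ * (1 - r ^ ψ) := by
        rw [hs₂eq]; ring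
      have h3 : (-b) * s₁ * (1 - r ^ ψ) > l₁ * (1 - r) := by
        rw [← h2]
        have : l₁ - l₂ = l₁ * (1 - r) := by
          field_simp [hrdef]; rw [hrdef]; field_simp
        linarith [hbneg, this ▸ hbneg]
      have h4 : l₁ * (1 - r ^ ψ) ≥ (-b) * s₁ * (1 - r ^ ψ) := by
        apply mul_le_mul_of_nonneg_right h1.le
        linarith
      have h5 : l₁ * (1 - r ^ ψ) > l₁ * (1 - r) := lt_of_lt_of_le h3 h4
      have h6 : 1 - r ^ ψ > 1 - r := lt_of_mul_lt_mul_left h5 hl₁pos.le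
      linarith
    · -- l₂ = l₁
      have : s₂ = s₁ := by rw [hs₂def, hs₁def, heqll]
      have : lamθ₂ = lamθ₁ := by
        have := hf₁; have := hf₂
        rw [heqll, ‹s₂ = s₁›] at hf₂
        linarith
      linarith
  -- s₁ < s₂
  have hs₁₂ : s₁ < s₂ := by
    apply Real.rpow_lt_rpow (div_nonneg hl₁ hlamx.le) _ hψ0
    gcongr
  -- s₂ * l₁ ≤ s₁ * l₂
  have hkey : s₂ * l₁ ≤ s₁ * l₂ := by
    set t : ℝ := l₂ / l₁ with htdef
    have ht1 : 1 ≤ t := (one_le_div hl₁pos).2 hll.le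
    have hsplit : l₂ / lamx = (l₁ / lamx) * t := by field_simp [htdef]; rw [htdef]; field_simp
    have hs₂eq : s₂ = s₁ * t ^ ψ := by
      rw [hs₂def, hsplit, Real.mul_rpow (div_nonneg hl₁ hlamx.le) (by linarith : (0:ℝ) ≤ t)]
    have htψ : t ^ ψ ≤ t := by
      have := Real.rpow_le_rpow_of_exponent_le ht1 hψ1.le
      rwa [Real.rpow_one] at this
    have hl₂eq : l₂ = l₁ * t := by field_simp [htdef]; rw [htdef]; field_simp
    rw [hs₂eq, hl₂eq]
    have : s₁ * t ^ ψ * l₁ ≤ s₁ * t * l₁ :=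
      mul_le_mul_of_nonneg_right (mul_le_mul_of_nonneg_left htψ hs₁0) hl₁pos.le
    linarith
  -- s₂ * lamθ₁ < s₁ * lamθ₂
  have hmain : s₂ * lamθ₁ < s₁ * lamθ₂ := by
    have e₁ : lamθ₁ = l₁ + b * s₁ - d * z := by linarith
    have e₂ : lamθ₂ = l₂ + b * s₂ - d * z := by linarith
    rw [e₁, e₂]
    nlinarith [mul_pos hdz (sub_pos.2 hs₁₂)]
  -- conclude
  have hratio : s₂ / lamθ₂ < s₁ / lamθ₁ := by
    rw [div_lt_div_iff₀ hθ₂ hθ₁]; exact hmain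
  have hrw₂ : (l₂ / lamx) ^ (2 * ψ) = s₂ ^ 2 := by
    rw [hs₂def, mul_comm (2:ℝ) ψ, Real.rpow_mul (div_nonneg hl₂ hlamx.le),
      Real.rpow_two]
  have hrw₁ : (l₁ / lamx) ^ (2 * ψ) = s₁ ^ 2 := by
    rw [hs₁def, mul_comm (2:ℝ) ψ, Real.rpow_mul (div_nonneg hl₁ hlamx.le),
      Real.rpow_two]
  have hθrw₂ : lamθ₂ ^ (-(2:ℝ)) = (lamθ₂ ^ 2)⁻¹ := by
    rw [Real.rpow_neg hθ₂.le, Real.rpow_two]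
  have hθrw₁ : lamθ₁ ^ (-(2:ℝ)) = (lamθ₁ ^ 2)⁻¹ := by
    rw [Real.rpow_neg hθ₁.le, Real.rpow_two]
  rw [hrw₁, hrw₂, hθrw₁, hθrw₂]
  have h2 : s₂ ^ 2 * (lamθ₂ ^ 2)⁻¹ = (s₂ / lamθ₂) ^ 2 := by
    field_simp
  have h1 : s₁ ^ 2 * (lamθ₁ ^ 2)⁻¹ = (s₁ / lamθ₁) ^ 2 := by
    field_simp
  rw [h1, h2]
  apply pow_lt_pow_left₀ hratio (div_nonneg hs₂0 hθ₂.le) (by norm_num)
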